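/- Let r be a positive integer, w = (w₁, w₁', w₂, w₂') ∈ ℤ≥0⁴, and let v' = (v₁', v₂'), v = (v₁, v₂) ∈ ℤ≥0² with v₁' ≤ v₁ and v₂' ≤ v₂. Let (x₁, x₂, y₁, …, y_r) ∈ E_w satisfy rank A = v₁' and rank B = v₂'. Then there is a bijection between the fiber F = {(X₁, X₂) : X₁ ⊆ ℂ^{w₁'} a subspace with dim X₁ = v₁ containing the column space of A, and X₂ ⊆ ℂ^{w₂'} × (ℂ^{w₁'})^r a subspace with dim X₂ = v₂ that is contained in ℂ^{w₂'} × X₁^{×r} and contains the column space of B} and the set 𝓜 = {(X₁', X₂') : X₁' ⊆ ℂ^{w₁'−v₁'} a subspace with dim X₁' = v₁ − v₁', and X₂' ⊆ ℂ^{w₂'+r·v₁'−v₂'} × (X₁')^{×r} a subspace with dim X₂' = v₂ − v₂'}. (This identifies the fiber of π : 𝓕̃_{v,w} → E_{v,w} over a point of the stratum E°_{v',w} with the Grassmannian-bundle 𝓜.) -/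

import Mathlib

open Matrix

noncomputable section

/-- The space `E_w` of tuples `(x₁, x₂, y₁, …, y_r)` of complex matrices, where `x₁` has size
`w₁'×w₁`, `x₂` has size `w₂'×w₂`, and each `y_h` has size `w₁'×w₂`. -/
abbrev EW (r w₁ w₁' w₂ w₂' : ℕ) : Type :=
  Matrix (Fin w₁') (Fin w₁) ℂ × Matrix (Fin w₂') (Fin w₂) ℂ ×
    (Fin r → Matrix (Fin w₁') (Fin w₂) ℂ)

/-- The horizontally concatenated block matrix `A = [x₁ y₁ ⋯ y_r]`. -/
def matA {r m a b : ℕ} (x₁ : Matrix (Fin m) (Fin a) ℂ)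
    (y : Fin r → Matrix (Fin m) (Fin b) ℂ) :
    Matrix (Fin m) (Fin a ⊕ Fin r × Fin b) ℂ :=
  Matrix.of fun i => Sum.elim (fun j => x₁ i j) (fun p => y p.1 i p.2)

/-- The vertically stacked block matrix `B = [x₂; y₁; ⋯; y_r]`. -/
def matB {r n a b : ℕ} (x₂ : Matrix (Fin a) (Fin n) ℂ)
    (y : Fin r → Matrix (Fin b) (Fin n) ℂ) :
    Matrix (Fin a ⊕ Fin r × Fin b) (Fin n) ℂ :=
  Matrix.of fun i j => Sum.elim (fun i₂ => x₂ i₂ j) (fun p => y p.1 p.2 j) i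

/-- The subspace `ℂ^{w₂'} × X₁^{×r}` of `ℂ^{w₂'} × (ℂ^{w₁'})^r`: all tuples `(a, u₁, …, u_r)`
whose last `r` components `u_h` all lie in `X₁`. -/
def prodSub (r w₂' w₁' : ℕ) (X₁ : Submodule ℂ (Fin w₁' → ℂ)) :
    Submodule ℂ (Fin w₂' ⊕ Fin r × Fin w₁' → ℂ) :=
  ⨅ h : Fin r, X₁.comap (LinearMap.funLeft ℂ ℂ fun i => Sum.inr (h, i))

open Module Submodule LinearMap

lemma mem_prodSub {r w₂' w₁' : ℕ} (X₁ : Submodule ℂ (Fin w₁' → ℂ))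
    (z : Fin w₂' ⊕ Fin r × Fin w₁' → ℂ) :
    z ∈ prodSub r w₂' w₁' X₁ ↔ ∀ h : Fin r, (fun i => z (Sum.inr (h, i))) ∈ X₁ := by
  simp only [prodSub, Submodule.mem_iInf, Submodule.mem_comap]
  exact Iff.rfl

lemma finrank_map_add_of_ker_le {M N : Type*} [AddCommGroup M] [Module ℂ M]
    [AddCommGroup N] [Module ℂ N] [FiniteDimensional ℂ M]
    (f : M →ₗ[ℂ] N) (p : Submodule ℂ M) (h : LinearMap.ker f ≤ p) :
    finrank ℂ (p.map f) + finrank ℂ (LinearMap.ker f) = finrank ℂ p := by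
  have h1 := LinearMap.finrank_range_add_finrank_ker (f.domRestrict p)
  rw [LinearMap.range_domRestrict] at h1
  have h2 : LinearMap.ker (f.domRestrict p) = (LinearMap.ker f).comap p.subtype := by
    ext x; simp [LinearMap.mem_ker]
  rw [h2, (Submodule.comapSubtypeEquivOfLe h).finrank_eq] at h1
  exact h1

lemma finrank_comap_of_surjective {M N : Type*} [AddCommGroup M] [Module ℂ M]
    [AddCommGroup N] [Module ℂ N] [FiniteDimensional ℂ M]
    (f : M →ₗ[ℂ] N) (hf : Function.Surjective f) (q : Submodule ℂ N) :
    finrank ℂ (q.comap f) = finrank ℂ q + finrank ℂ (LinearMap.ker f) := by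
  have hk : LinearMap.ker f ≤ q.comap f := by
    intro x hx
    rw [Submodule.mem_comap, LinearMap.mem_ker.mp hx]
    exact q.zero_mem
  have h1 := finrank_map_add_of_ker_le f (q.comap f) hk
  rw [Submodule.map_comap_eq_of_surjective hf] at h1
  omega

set_option synthInstance.maxHeartbeats 1000000 in
set_option maxHeartbeats 4000000 in
theorem stmt_7 (r w₁ w₁' w₂ w₂' v₁ v₂ v₁' v₂' : ℕ) (hr : 0 < r)
    (h₁ : v₁' ≤ v₁) (h₂ : v₂' ≤ v₂)
    (x₁ : Matrix (Fin w₁') (Fin w₁) ℂ) (x₂ : Matrix (Fin w₂') (Fin w₂) ℂ)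
    (y : Fin r → Matrix (Fin w₁') (Fin w₂) ℂ)
    (hA : (matA x₁ y).rank = v₁') (hB : (matB x₂ y).rank = v₂') :
    Nonempty (
      {p : Submodule ℂ (Fin w₁' → ℂ) × Submodule ℂ (Fin w₂' ⊕ Fin r × Fin w₁' → ℂ) //
        Module.finrank ℂ p.1 = v₁ ∧ Module.finrank ℂ p.2 = v₂ ∧
        p.2 ≤ prodSub r w₂' w₁' p.1 ∧
        LinearMap.range (matA x₁ y).mulVecLin ≤ p.1 ∧
        LinearMap.range (matB x₂ y).mulVecLin ≤ p.2} ≃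
      {q : Submodule ℂ (Fin (w₁' - v₁') → ℂ) ×
          Submodule ℂ (Fin (w₂' + r * v₁' - v₂') ⊕ Fin r × Fin (w₁' - v₁') → ℂ) //
        Module.finrank ℂ q.1 = v₁ - v₁' ∧ Module.finrank ℂ q.2 = v₂ - v₂' ∧
        q.2 ≤ prodSub r (w₂' + r * v₁' - v₂') (w₁' - v₁') q.1}) := by
  classical
  set V₁ : Submodule ℂ (Fin w₁' → ℂ) := LinearMap.range (matA x₁ y).mulVecLin with hV₁def
  set V₂ : Submodule ℂ (Fin w₂' ⊕ Fin r × Fin w₁' → ℂ) :=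
    LinearMap.range (matB x₂ y).mulVecLin with hV₂def
  have hrV₁ : finrank ℂ V₁ = v₁' := hA
  have hrV₂ : finrank ℂ V₂ = v₂' := hB
  have hv₁w : v₁' ≤ w₁' := by
    have h := Submodule.finrank_le V₁
    rw [hrV₁, Module.finrank_pi] at h
    simpa using h
  have hq₁ : finrank ℂ ((Fin w₁' → ℂ) ⧸ V₁) = w₁' - v₁' := by
    have h := Submodule.finrank_quotient_add_finrank V₁
    rw [hrV₁, Module.finrank_pi] at h
    simp at h; omega
  let e₁ : ((Fin w₁' → ℂ) ⧸ V₁) ≃ₗ[ℂ] (Fin (w₁' - v₁') → ℂ) :=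
    LinearEquiv.ofFinrankEq _ _ (by rw [hq₁, Module.finrank_pi]; simp)
  let f : (Fin w₁' → ℂ) →ₗ[ℂ] (Fin (w₁' - v₁') → ℂ) := e₁.toLinearMap ∘ₗ V₁.mkQ
  have hfker : LinearMap.ker f = V₁ := by
    ext z
    simp [f, LinearMap.mem_ker, Submodule.Quotient.mk_eq_zero]
  have hfsurj : Function.Surjective f :=
    e₁.surjective.comp V₁.mkQ_surjective
  -- coordinate projections
  set π : Fin r → ((Fin w₂' ⊕ Fin r × Fin w₁' → ℂ) →ₗ[ℂ] (Fin w₁' → ℂ)) :=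
    (fun h => LinearMap.funLeft ℂ ℂ fun i => Sum.inr (h, i)) with hπdef
  set W : Submodule ℂ (Fin w₂' ⊕ Fin r × Fin w₁' → ℂ) := prodSub r w₂' w₁' V₁ with hWdef
  have hmemW : ∀ z, z ∈ W ↔ ∀ h, π h z ∈ V₁ := by
    intro z
    rw [hWdef, mem_prodSub]
    exact Iff.rfl
  -- column space of B lands in W
  have key : ∀ (c : Fin w₂ → ℂ) (h : Fin r), (y h).mulVec c ∈ V₁ := by
    intro c h
    refine ⟨Sum.elim 0 (fun p => if p.1 = h then c p.2 else 0), ?_⟩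
    funext i
    simp only [Matrix.mulVecLin_apply, Matrix.mulVec, dotProduct, matA, Matrix.of_apply,
      Fintype.sum_sum_type, Sum.elim_inl, Sum.elim_inr, Fintype.sum_prod_type, mul_zero,
      Finset.sum_const_zero, zero_add, mul_ite]
    rw [Finset.sum_comm]
    simp
  have hV₂W : V₂ ≤ W := by
    rintro z ⟨c, rfl⟩
    rw [hmemW]
    intro h
    have h1 : π h ((matB x₂ y).mulVecLin c) = (y h).mulVec c := by
      funext i
      simp [hπdef, Matrix.mulVecLin_apply, Matrix.mulVec, dotProduct, matB]
    rw [h1]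
    exact key c h
  -- finrank of W
  set Θ : (Fin w₂' ⊕ Fin r × Fin w₁' → ℂ) →ₗ[ℂ] (Fin r → (Fin w₁' → ℂ) ⧸ V₁) :=
    LinearMap.pi (fun h => V₁.mkQ ∘ₗ π h) with hΘdef
  have hkerΘ : LinearMap.ker Θ = W := by
    ext z
    rw [LinearMap.mem_ker, hmemW, hΘdef, funext_iff]
    simp [Submodule.Quotient.mk_eq_zero]
  have hΘsurj : Function.Surjective Θ := by
    intro q
    have hex : ∀ h : Fin r, ∃ u, V₁.mkQ u = q h := fun h => V₁.mkQ_surjective (q h)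
    choose u hu using hex
    refine ⟨Sum.elim 0 (fun p => u p.1 p.2), ?_⟩
    funext h
    exact hu h
  have hWr : finrank ℂ W = w₂' + r * v₁' := by
    have h3 := LinearMap.finrank_range_add_finrank_ker Θ
    rw [hkerΘ, LinearMap.range_eq_top.mpr hΘsurj, finrank_top, Module.finrank_pi,
      Module.finrank_pi_fintype] at h3
    simp only [hq₁, Finset.sum_const, Finset.card_univ, Fintype.card_fin, smul_eq_mul,
      Fintype.card_sum, Fintype.card_prod, Fintype.card_fin] at h3
    obtain ⟨k, hk⟩ := Nat.exists_eq_add_of_le hv₁w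
    have hk' : w₁' - v₁' = k := by omega
    rw [hk'] at h3
    have h4 : r * w₁' = r * v₁' + r * k := by rw [hk, Nat.mul_add]
    linarith
  have hv₂W : v₂' ≤ w₂' + r * v₁' := by
    have := Submodule.finrank_mono hV₂W
    rw [hrV₂, hWr] at this
    exact this
  -- the second quotient map Ψ
  set V₂W : Submodule ℂ W := V₂.comap W.subtype with hV₂Wdef
  have hrV₂W : finrank ℂ V₂W = v₂' := by
    rw [(Submodule.comapSubtypeEquivOfLe hV₂W).finrank_eq]
    exact hrV₂
  have hq₂ : finrank ℂ (W ⧸ V₂W) = w₂' + r * v₁' - v₂' := by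
    have h := Submodule.finrank_quotient_add_finrank V₂W
    rw [hrV₂W, hWr] at h
    omega
  set e₂ : (W ⧸ V₂W) ≃ₗ[ℂ] (Fin (w₂' + r * v₁' - v₂') → ℂ) :=
    LinearEquiv.ofFinrankEq _ _ (by rw [hq₂, Module.finrank_pi]; simp) with he₂def
  obtain ⟨D, hD⟩ := Submodule.exists_isCompl W
  set pr : (Fin w₂' ⊕ Fin r × Fin w₁' → ℂ) →ₗ[ℂ] W :=
    Submodule.projectionOnto W D hD with hprdef
  set Ψ₁ : (Fin w₂' ⊕ Fin r × Fin w₁' → ℂ) →ₗ[ℂ] (Fin (w₂' + r * v₁' - v₂') → ℂ) :=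
    e₂.toLinearMap ∘ₗ V₂W.mkQ ∘ₗ pr with hΨ₁def
  have hΨ₁W : ∀ w : W, Ψ₁ w = e₂ (V₂W.mkQ w) := by
    intro w
    rw [hΨ₁def]
    simp [hprdef, Submodule.projectionOnto_apply_left W D hD w]
  set Ψ : (Fin w₂' ⊕ Fin r × Fin w₁' → ℂ) →ₗ[ℂ]
      (Fin (w₂' + r * v₁' - v₂') ⊕ Fin r × Fin (w₁' - v₁') → ℂ) :=
    LinearMap.pi (fun k => Sum.elim (fun n => LinearMap.proj n ∘ₗ Ψ₁)
      (fun p => LinearMap.proj p.2 ∘ₗ f ∘ₗ π p.1) k) with hΨdef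
  have hΨinl : ∀ z n, Ψ z (Sum.inl n) = Ψ₁ z n := fun z n => rfl
  have hΨinr : ∀ z (h : Fin r) i, Ψ z (Sum.inr (h, i)) = f (π h z) i := fun z h i => rfl
  have hkerΨ : LinearMap.ker Ψ = V₂ := by
    ext z
    constructor
    · intro hz
      have hz' : ∀ k, Ψ z k = 0 := fun k => congrFun (LinearMap.mem_ker.mp hz) k
      have hzW : z ∈ W := by
        rw [hmemW]
        intro h
        rw [← hfker, LinearMap.mem_ker]
        funext i
        exact hz' (Sum.inr (h, i))
      have h1 : Ψ₁ z = 0 := funext fun n => hz' (Sum.inl n)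
      rw [hΨ₁W ⟨z, hzW⟩] at h1
      have h2 : V₂W.mkQ ⟨z, hzW⟩ = 0 := by
        apply e₂.injective
        rw [h1, map_zero]
      rw [Submodule.mkQ_apply, Submodule.Quotient.mk_eq_zero] at h2
      exact h2
    · intro hz
      have hzW : z ∈ W := hV₂W hz
      rw [LinearMap.mem_ker]
      funext k
      rcases k with n | ⟨h, i⟩
      · rw [hΨinl, hΨ₁W ⟨z, hzW⟩]
        have h2 : V₂W.mkQ ⟨z, hzW⟩ = 0 := by
          rw [Submodule.mkQ_apply, Submodule.Quotient.mk_eq_zero]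
          exact hz
        rw [h2, map_zero]
        rfl
      · rw [hΨinr]
        have h3 : π h z ∈ LinearMap.ker f := by rw [hfker]; exact (hmemW z).mp hzW h
        rw [LinearMap.mem_ker.mp h3]
        rfl
  have hΨsurj : Function.Surjective Ψ := by
    intro t
    have hex : ∀ h : Fin r, ∃ u, f u = fun i => t (Sum.inr (h, i)) := fun h => hfsurj _
    choose u hu using hex
    set z₀ : Fin w₂' ⊕ Fin r × Fin w₁' → ℂ := Sum.elim 0 (fun p => u p.1 p.2) with hz₀def
    obtain ⟨w0, hw0⟩ := V₂W.mkQ_surjective (e₂.symm ((fun n => t (Sum.inl n)) - Ψ₁ z₀))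
    refine ⟨z₀ + (w0 : Fin w₂' ⊕ Fin r × Fin w₁' → ℂ), ?_⟩
    have hΨ₁w0 : Ψ₁ (w0 : Fin w₂' ⊕ Fin r × Fin w₁' → ℂ) =
        (fun n => t (Sum.inl n)) - Ψ₁ z₀ := by
      rw [hΨ₁W w0, hw0, LinearEquiv.apply_symm_apply]
    funext k
    rcases k with n | ⟨h, i⟩
    · rw [hΨinl, map_add, Pi.add_apply, hΨ₁w0]
      simp
    · rw [hΨinr, map_add, map_add]
      have h4 : π h (w0 : Fin w₂' ⊕ Fin r × Fin w₁' → ℂ) ∈ LinearMap.ker f := by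
        rw [hfker]
        exact (hmemW _).mp w0.2 h
      have h5 : π h z₀ = u h := rfl
      rw [h5, LinearMap.mem_ker.mp h4, add_zero, hu h]
  refine ⟨⟨fun p => ⟨(p.1.1.map f, p.1.2.map Ψ), ?_⟩,
    fun q => ⟨(q.1.1.comap f, q.1.2.comap Ψ), ?_⟩, ?_, ?_⟩⟩
  · obtain ⟨⟨X₁, X₂⟩, hX₁r, hX₂r, hle, hA1, hB1⟩ := p
    dsimp only at hX₁r hX₂r hle hA1 hB1 ⊢
    refine ⟨?_, ?_, ?_⟩
    · have hkle : LinearMap.ker f ≤ X₁ := by rw [hfker]; exact hA1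
      have h5 := finrank_map_add_of_ker_le f X₁ hkle
      rw [hfker, hrV₁, hX₁r] at h5
      omega
    · have hkle : LinearMap.ker Ψ ≤ X₂ := by rw [hkerΨ]; exact hB1
      have h5 := finrank_map_add_of_ker_le Ψ X₂ hkle
      rw [hkerΨ, hrV₂, hX₂r] at h5
      omega
    · rintro _ ⟨z, hz, rfl⟩
      rw [mem_prodSub]
      intro h
      refine Submodule.mem_map.mpr ⟨π h z, (mem_prodSub X₁ z).mp (hle hz) h, ?_⟩
      funext i
      exact (hΨinr z h i).symm
  · obtain ⟨⟨X₁', X₂'⟩, hX₁r, hX₂r, hle⟩ := q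
    dsimp only at hX₁r hX₂r hle ⊢
    refine ⟨?_, ?_, ?_, ?_, ?_⟩
    · have h5 := finrank_comap_of_surjective f hfsurj X₁'
      rw [hfker, hrV₁, hX₁r] at h5
      omega
    · have h5 := finrank_comap_of_surjective Ψ hΨsurj X₂'
      rw [hkerΨ, hrV₂, hX₂r] at h5
      omega
    · intro z hz
      rw [mem_prodSub]
      intro h
      rw [Submodule.mem_comap]
      exact (mem_prodSub X₁' (Ψ z)).mp (hle hz) h
    · intro x hx
      rw [Submodule.mem_comap]
      have h8 : f x = 0 := by
        rw [← LinearMap.mem_ker, hfker]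
        exact hx
      rw [h8]
      exact X₁'.zero_mem
    · intro x hx
      rw [Submodule.mem_comap]
      have h8 : Ψ x = 0 := by
        rw [← LinearMap.mem_ker, hkerΨ]
        exact hx
      rw [h8]
      exact X₂'.zero_mem
  · rintro ⟨⟨X₁, X₂⟩, hX₁r, hX₂r, hle, hA1, hB1⟩
    apply Subtype.ext
    dsimp only
    rw [Submodule.comap_map_eq, Submodule.comap_map_eq, hfker, hkerΨ,
      sup_eq_left.mpr hA1, sup_eq_left.mpr hB1]
  · rintro ⟨⟨X₁', X₂'⟩, hX₁r, hX₂r, hle⟩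
    apply Subtype.ext
    dsimp only
    rw [Submodule.map_comap_eq_of_surjective hfsurj, Submodule.map_comap_eq_of_surjective hΨsurj]
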